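/- Let Y₁, …, Y_B be independent ℝ^d-valued random vectors on a probability space, each Bochner integrable with common mean m = E[Yᵢ], and suppose ‖Yᵢ − m‖ ≤ σ almost surely for every i, where σ ≥ 0 and B ≥ 1. Then for every δ ∈ (0,1), P[ ‖(1/B)·∑_{i=1}^{B} Yᵢ − m‖ ≤ σ·√(2·log(2/δ)/B) ] ≥ 1 − δ. -/

import Mathlib

open MeasureTheory ProbabilityTheory

section BatchMeanAux


lemma sinh_le_mul_cosh {t : ℝ} (ht : 0 ≤ t) : Real.sinh t ≤ t * Real.cosh t := by
  have key : ∀ x ∈ Set.Ici (0:ℝ), HasDerivAt (fun y => y * Real.cosh y - Real.sinh y)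
      (x * Real.sinh x) x := by
    intro x _
    have h1 : HasDerivAt (fun y : ℝ => y * Real.cosh y - Real.sinh y)
        (1 * Real.cosh x + x * Real.sinh x - Real.cosh x) x :=
      ((hasDerivAt_id x).mul (Real.hasDerivAt_cosh x)).sub (Real.hasDerivAt_sinh x)
    convert h1 using 1; ring
  have hmono : MonotoneOn (fun y => y * Real.cosh y - Real.sinh y) (Set.Ici (0:ℝ)) := by
    apply monotoneOn_of_deriv_nonneg (convex_Ici 0)
    · exact (Continuous.sub (continuous_id.mul Real.continuous_cosh) Real.continuous_sinh).continuousOn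
    · intro x hx
      rw [interior_Ici, Set.mem_Ioi] at hx
      exact (key x (le_of_lt hx)).differentiableAt.differentiableWithinAt
    · intro x hx
      rw [interior_Ici, Set.mem_Ioi] at hx
      rw [(key x hx.le).deriv]
      exact mul_nonneg hx.le (Real.sinh_nonneg_iff.2 hx.le)
  have := hmono (Set.self_mem_Ici) (Set.mem_Ici.2 ht) ht
  simp only [Real.sinh_zero, Real.cosh_zero, mul_one, zero_mul, sub_zero, zero_sub, neg_zero] at this
  linarith

lemma convexOn_cosh_sqrt : ConvexOn ℝ (Set.Ici (0:ℝ)) (fun t => Real.cosh (Real.sqrt t)) := by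
  have hint : interior (Set.Ici (0:ℝ)) = Set.Ioi 0 := interior_Ici
  apply convexOn_of_hasDerivWithinAt2_nonneg (f' := fun t => Real.sinh (Real.sqrt t) / (2 * Real.sqrt t))
    (f'' := fun t => (Real.cosh (Real.sqrt t) * (1 / (2 * Real.sqrt t)) * (2 * Real.sqrt t)
      - Real.sinh (Real.sqrt t) * (2 * (1 / (2 * Real.sqrt t)))) / (2 * Real.sqrt t) ^ 2)
    (convex_Ici 0)
  · exact (Real.continuous_cosh.comp Real.continuous_sqrt).continuousOn
  · intro x hx
    rw [hint] at hx
    have hx0 : (0:ℝ) < x := hx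
    have hs : HasDerivAt (fun t : ℝ => Real.sqrt t) (1 / (2 * Real.sqrt x)) x :=
      Real.hasDerivAt_sqrt hx0.ne'
    have h := (Real.hasDerivAt_cosh (Real.sqrt x)).comp x hs
    have : HasDerivAt (fun t => Real.cosh (Real.sqrt t))
        (Real.sinh (Real.sqrt x) / (2 * Real.sqrt x)) x := by
      rw [← mul_one_div]; exact h
    exact this.hasDerivWithinAt
  · intro x hx
    rw [hint] at hx
    have hx0 : (0:ℝ) < x := hx
    have hsx : 0 < Real.sqrt x := Real.sqrt_pos.2 hx0
    have hs : HasDerivAt (fun t : ℝ => Real.sqrt t) (1 / (2 * Real.sqrt x)) x :=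
      Real.hasDerivAt_sqrt hx0.ne'
    have hnum : HasDerivAt (fun t => Real.sinh (Real.sqrt t))
        (Real.cosh (Real.sqrt x) * (1 / (2 * Real.sqrt x))) x :=
      (Real.hasDerivAt_sinh (Real.sqrt x)).comp x hs
    have hden : HasDerivAt (fun t : ℝ => 2 * Real.sqrt t) (2 * (1 / (2 * Real.sqrt x))) x :=
      hs.const_mul 2
    have hd : HasDerivAt (fun t => Real.sinh (Real.sqrt t) / (2 * Real.sqrt t)) _ x :=
      hnum.div hden (by positivity)
    exact hd.hasDerivWithinAt
  · intro x hx
    rw [hint] at hx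
    have hx0 : (0:ℝ) < x := hx
    have hsx : 0 < Real.sqrt x := Real.sqrt_pos.2 hx0
    have hkey : Real.sinh (Real.sqrt x) ≤ Real.sqrt x * Real.cosh (Real.sqrt x) :=
      sinh_le_mul_cosh hsx.le
    have hnum : 0 ≤ Real.cosh (Real.sqrt x) * (1 / (2 * Real.sqrt x)) * (2 * Real.sqrt x)
        - Real.sinh (Real.sqrt x) * (2 * (1 / (2 * Real.sqrt x))) := by
      have e1 : Real.cosh (Real.sqrt x) * (1 / (2 * Real.sqrt x)) * (2 * Real.sqrt x)
          = Real.cosh (Real.sqrt x) := by field_simp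
      have e2 : Real.sinh (Real.sqrt x) * (2 * (1 / (2 * Real.sqrt x)))
          = Real.sinh (Real.sqrt x) / Real.sqrt x := by field_simp
      rw [e1, e2, sub_nonneg, div_le_iff₀ hsx]
      linarith [hkey]
    positivity

lemma cosh_sqrt_mono {a b : ℝ} (ha : 0 ≤ a) (hab : a ≤ b) :
    Real.cosh (Real.sqrt a) ≤ Real.cosh (Real.sqrt b) := by
  rw [Real.cosh_le_cosh, abs_of_nonneg (Real.sqrt_nonneg a), abs_of_nonneg (Real.sqrt_nonneg b)]
  exact Real.sqrt_le_sqrt hab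

lemma cosh_sqrt_sq {lam c : ℝ} (hlam : 0 ≤ lam) (hc : 0 ≤ c) :
    Real.cosh (Real.sqrt ((lam * c) ^ 2)) = Real.cosh (lam * c) := by
  rw [Real.sqrt_sq (mul_nonneg hlam hc)]

lemma chord_bound {lam b σ s v : ℝ} (hlam : 0 ≤ lam) (hb : 0 ≤ b) (hσ : 0 ≤ σ)
    (hs : |s| ≤ 1) (hv : 0 ≤ v) (hv2 : v ≤ b ^ 2 + σ ^ 2 + 2 * b * σ * s) :
    Real.cosh (lam * Real.sqrt v) ≤
      Real.cosh (lam * b) * Real.cosh (lam * σ)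
        + s * (Real.sinh (lam * b) * Real.sinh (lam * σ)) := by
  have hs1 : -1 ≤ s := neg_le_of_abs_le hs
  have hs2 : s ≤ 1 := le_of_abs_le hs
  set θ : ℝ := (1 - s) / 2 with hθdef
  have hθ0 : 0 ≤ θ := by simp only [hθdef]; linarith
  have hθ1 : 0 ≤ 1 - θ := by simp only [hθdef]; linarith
  have hθs : θ + (1 - θ) = 1 := by ring
  set A : ℝ := (lam * (b - σ)) ^ 2 with hA
  set C : ℝ := (lam * (b + σ)) ^ 2 with hC
  have hAc : θ • A + (1 - θ) • C = lam ^ 2 * (b ^ 2 + σ ^ 2 + 2 * b * σ * s) := by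
    simp only [smul_eq_mul, hA, hC, hθdef]; ring
  have hchord := convexOn_cosh_sqrt.2 (Set.mem_Ici.2 (sq_nonneg _)) (Set.mem_Ici.2 (sq_nonneg _))
      hθ0 hθ1 hθs (x := A) (y := C)
  have hmono : Real.cosh (Real.sqrt (lam ^ 2 * v)) ≤ Real.cosh (Real.sqrt (θ • A + (1 - θ) • C)) := by
    apply cosh_sqrt_mono (by positivity)
    rw [hAc]
    have := mul_le_mul_of_nonneg_left hv2 (sq_nonneg lam)
    linarith
  have heq1 : Real.sqrt (lam ^ 2 * v) = lam * Real.sqrt v := by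
    rw [Real.sqrt_mul (sq_nonneg lam), Real.sqrt_sq hlam]
  have heq2 : Real.cosh (Real.sqrt A) = Real.cosh (lam * (b - σ)) := by
    rw [hA, Real.sqrt_sq_eq_abs, Real.cosh_abs]
  have heq3 : Real.cosh (Real.sqrt C) = Real.cosh (lam * (b + σ)) := by
    rw [hC, Real.sqrt_sq_eq_abs, Real.cosh_abs]
  have hfin : Real.cosh (lam * Real.sqrt v)
      ≤ θ * Real.cosh (lam * (b - σ)) + (1 - θ) * Real.cosh (lam * (b + σ)) := by
    calc Real.cosh (lam * Real.sqrt v) = Real.cosh (Real.sqrt (lam ^ 2 * v)) := by rw [heq1]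
    _ ≤ Real.cosh (Real.sqrt (θ • A + (1 - θ) • C)) := hmono
    _ ≤ θ • Real.cosh (Real.sqrt A) + (1 - θ) • Real.cosh (Real.sqrt C) := hchord
    _ = θ * Real.cosh (lam * (b - σ)) + (1 - θ) * Real.cosh (lam * (b + σ)) := by
        rw [heq2, heq3]; simp [smul_eq_mul]
  have hexp1 : Real.cosh (lam * (b - σ)) =
      Real.cosh (lam * b) * Real.cosh (lam * σ) - Real.sinh (lam * b) * Real.sinh (lam * σ) := by
    rw [mul_sub, Real.cosh_sub]
  have hexp2 : Real.cosh (lam * (b + σ)) =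
      Real.cosh (lam * b) * Real.cosh (lam * σ) + Real.sinh (lam * b) * Real.sinh (lam * σ) := by
    rw [mul_add, Real.cosh_add]
  rw [hexp1, hexp2] at hfin
  have : θ * (Real.cosh (lam * b) * Real.cosh (lam * σ) - Real.sinh (lam * b) * Real.sinh (lam * σ))
      + (1 - θ) * (Real.cosh (lam * b) * Real.cosh (lam * σ) + Real.sinh (lam * b) * Real.sinh (lam * σ))
      = Real.cosh (lam * b) * Real.cosh (lam * σ) + s * (Real.sinh (lam * b) * Real.sinh (lam * σ)) := by
    simp only [hθdef]; ring
  linarith [hfin, this.ge]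

lemma vec_cosh_bound {H : Type*} [NormedAddCommGroup H] [InnerProductSpace ℝ H] {lam σ : ℝ} (hlam : 0 ≤ lam) (hσ : 0 ≤ σ) (x w : H) (hw : ‖w‖ ≤ σ) :
    Real.cosh (lam * ‖x + w‖) ≤
      Real.cosh (lam * ‖x‖) * Real.cosh (lam * σ)
        + (Real.sinh (lam * ‖x‖) * Real.sinh (lam * σ) / (‖x‖ * σ)) * (inner ℝ x w : ℝ) := by
  by_cases hbs : ‖x‖ * σ = 0
  · -- degenerate cases
    rcases mul_eq_zero.1 hbs with hx | hσ0
    · -- x = 0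
      have hx0 : ‖x‖ = 0 := hx
      have hxz : x = 0 := norm_eq_zero.1 hx0
      subst hxz
      simp only [norm_zero, mul_zero, Real.cosh_zero, one_mul, inner_zero_left, mul_zero,
        zero_add, zero_mul, add_zero, Real.sinh_zero]
      have : Real.cosh (lam * ‖w‖) ≤ Real.cosh (lam * σ) := by
        rw [Real.cosh_le_cosh, abs_of_nonneg (by positivity), abs_of_nonneg (by positivity)]
        exact mul_le_mul_of_nonneg_left hw hlam
      simpa using this
    · -- σ = 0 so w = 0
      have hw0 : w = 0 := norm_eq_zero.1 (le_antisymm (hσ0 ▸ hw) (norm_nonneg w))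
      subst hw0
      simp [hσ0, Real.cosh_zero]
  · have hx0 : 0 < ‖x‖ := by
      rcases (mul_ne_zero_iff.1 hbs) with ⟨h1, _⟩
      exact lt_of_le_of_ne (norm_nonneg x) (Ne.symm h1)
    have hσ0 : 0 < σ := by
      rcases (mul_ne_zero_iff.1 hbs) with ⟨_, h2⟩
      exact lt_of_le_of_ne hσ (Ne.symm h2)
    set s : ℝ := (inner ℝ x w : ℝ) / (‖x‖ * σ) with hsdef
    have hs : |s| ≤ 1 := by
      rw [hsdef, abs_div, abs_of_pos (mul_pos hx0 hσ0), div_le_one (mul_pos hx0 hσ0)]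
      calc |(inner ℝ x w : ℝ)| ≤ ‖x‖ * ‖w‖ := abs_real_inner_le_norm x w
        _ ≤ ‖x‖ * σ := mul_le_mul_of_nonneg_left hw hx0.le
    have hv2 : ‖x + w‖ ^ 2 ≤ ‖x‖ ^ 2 + σ ^ 2 + 2 * ‖x‖ * σ * s := by
      rw [norm_add_sq_real]
      have h1 : ‖w‖ ^ 2 ≤ σ ^ 2 := by
        apply pow_le_pow_left₀ (norm_nonneg w) hw
      have h2 : 2 * ‖x‖ * σ * s = 2 * (inner ℝ x w : ℝ) := by
        rw [hsdef]; field_simp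
      rw [h2]; linarith
    have hkey := chord_bound hlam (norm_nonneg x) hσ hs (sq_nonneg ‖x + w‖) hv2
    rw [Real.sqrt_sq (norm_nonneg _)] at hkey
    have heq : (Real.sinh (lam * ‖x‖) * Real.sinh (lam * σ) / (‖x‖ * σ)) * (inner ℝ x w : ℝ)
        = s * (Real.sinh (lam * ‖x‖) * Real.sinh (lam * σ)) := by
      rw [hsdef]; field_simp
    rw [heq]
    exact hkey

lemma integral_cosh_step {H : Type*} [NormedAddCommGroup H] [InnerProductSpace ℝ H]
    [CompleteSpace H] {Ω' : Type*} [MeasurableSpace Ω'] (μ : Measure Ω')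
    [IsProbabilityMeasure μ] {W : Ω' → H} (hWi : Integrable W μ)
    (hW0 : ∫ ω, W ω ∂μ = 0) {σ : ℝ} (hσ : 0 ≤ σ) (hWb : ∀ᵐ ω ∂μ, ‖W ω‖ ≤ σ)
    {lam : ℝ} (hlam : 0 ≤ lam) (x : H) :
    ∫ ω, Real.cosh (lam * ‖x + W ω‖) ∂μ ≤ Real.cosh (lam * ‖x‖) * Real.cosh (lam * σ) := by
  set C : ℝ := Real.sinh (lam * ‖x‖) * Real.sinh (lam * σ) / (‖x‖ * σ) with hC
  have hWm : AEStronglyMeasurable W μ := hWi.aestronglyMeasurable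
  have hfm : AEStronglyMeasurable (fun ω => Real.cosh (lam * ‖x + W ω‖)) μ :=
    (Real.continuous_cosh.comp (continuous_const.mul continuous_norm)).comp_aestronglyMeasurable
      (aestronglyMeasurable_const.add hWm)
  have hfi : Integrable (fun ω => Real.cosh (lam * ‖x + W ω‖)) μ := by
    refine Integrable.mono' (integrable_const (Real.cosh (lam * (‖x‖ + σ)))) hfm ?_
    filter_upwards [hWb] with ω hω
    rw [Real.norm_eq_abs, abs_of_nonneg (Real.cosh_pos _).le]
    · rw [Real.cosh_le_cosh, abs_of_nonneg (by positivity), abs_of_nonneg (by positivity)]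
      apply mul_le_mul_of_nonneg_left _ hlam
      calc ‖x + W ω‖ ≤ ‖x‖ + ‖W ω‖ := norm_add_le _ _
        _ ≤ ‖x‖ + σ := by linarith
  have hgi : Integrable (fun ω => Real.cosh (lam * ‖x‖) * Real.cosh (lam * σ)
      + C * (inner ℝ x (W ω) : ℝ)) μ := by
    exact (integrable_const _).add ((hWi.const_inner x).const_mul C)
  have hle : ∫ ω, Real.cosh (lam * ‖x + W ω‖) ∂μ
      ≤ ∫ ω, (Real.cosh (lam * ‖x‖) * Real.cosh (lam * σ) + C * (inner ℝ x (W ω) : ℝ)) ∂μ := by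
    refine integral_mono_ae hfi hgi ?_
    filter_upwards [hWb] with ω hω
    exact vec_cosh_bound hlam hσ x (W ω) hω
  have heval : ∫ ω, (Real.cosh (lam * ‖x‖) * Real.cosh (lam * σ) + C * (inner ℝ x (W ω) : ℝ)) ∂μ
      = Real.cosh (lam * ‖x‖) * Real.cosh (lam * σ) := by
    rw [integral_add (integrable_const _) ((hWi.const_inner x).const_mul C),
      integral_const, integral_const_mul, integral_inner hWi, hW0]
    simp
  rw [heval] at hle
  exact hle

lemma iIndepFun_congr_ae {ι Ω : Type*} {β : ι → Type*} [MeasurableSpace Ω] {μ : Measure Ω}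
    [m : ∀ i, MeasurableSpace (β i)] {f g : ∀ i, Ω → β i}
    (h : iIndepFun f μ) (h' : ∀ i, f i =ᵐ[μ] g i) : iIndepFun g μ := by
  rw [iIndepFun_iff_measure_inter_preimage_eq_mul] at h ⊢
  intro S sets H
  have hS : ∀ᵐ ω ∂μ, ∀ i ∈ S, f i ω = g i ω :=
    (ae_ball_iff S.countable_toSet).2 fun i _ => h' i
  have h1 : ∀ i ∈ S, μ (f i ⁻¹' sets i) = μ (g i ⁻¹' sets i) := by
    intro i _
    apply measure_congr
    filter_upwards [h' i] with ω hω
    show (f i ω ∈ sets i) = (g i ω ∈ sets i)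
    rw [hω]
  have h2 : μ (⋂ i ∈ S, f i ⁻¹' sets i) = μ (⋂ i ∈ S, g i ⁻¹' sets i) := by
    apply measure_congr
    filter_upwards [hS] with ω hω
    show (ω ∈ ⋂ i ∈ S, f i ⁻¹' sets i) = (ω ∈ ⋂ i ∈ S, g i ⁻¹' sets i)
    simp only [eq_iff_iff, Set.mem_iInter, Set.mem_preimage]
    constructor
    · intro hmem i hi; rw [← hω i hi]; exact hmem i hi
    · intro hmem i hi; rw [hω i hi]; exact hmem i hi
  rw [← h2, h S H]
  exact Finset.prod_congr rfl h1

lemma sum_cosh_bound {H : Type*} [NormedAddCommGroup H] [InnerProductSpace ℝ H]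
    [CompleteSpace H] [MeasurableSpace H] [BorelSpace H] [SecondCountableTopology H]
    {Ω : Type*} [MeasurableSpace Ω] {μ : Measure Ω} [IsProbabilityMeasure μ]
    {ι : Type*} {X : ι → Ω → H} (hm : ∀ i, Measurable (X i))
    (hindep : iIndepFun X μ)
    (hi : ∀ i, Integrable (X i) μ) (h0 : ∀ i, ∫ ω, X i ω ∂μ = 0)
    {σ : ℝ} (hσ : 0 ≤ σ) (hb : ∀ i, ∀ᵐ ω ∂μ, ‖X i ω‖ ≤ σ)
    {lam : ℝ} (hlam : 0 ≤ lam) (s : Finset ι) :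
    ∫ ω, Real.cosh (lam * ‖∑ i ∈ s, X i ω‖) ∂μ ≤ Real.cosh (lam * σ) ^ s.card := by
  classical
  induction s using Finset.cons_induction with
  | empty => simp
  | cons j s hj IH =>
    set F : H → ℝ := fun u => Real.cosh (lam * ‖u‖) with hF
    have hFc : Continuous F := Real.continuous_cosh.comp (continuous_const.mul continuous_norm)
    set U : Ω → H := fun ω => ∑ i ∈ s, X i ω with hU
    have hUm : Measurable U := Finset.measurable_sum s (fun i _ => hm i)
    have hUb : ∀ᵐ ω ∂μ, ‖U ω‖ ≤ s.card * σ := by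
      have hball : ∀ᵐ ω ∂μ, ∀ i ∈ s, ‖X i ω‖ ≤ σ :=
        (ae_ball_iff s.countable_toSet).2 fun i _ => hb i
      filter_upwards [hball] with ω hω
      calc ‖∑ i ∈ s, X i ω‖ ≤ ∑ i ∈ s, ‖X i ω‖ := norm_sum_le _ _
        _ ≤ ∑ _i ∈ s, σ := Finset.sum_le_sum hω
        _ = s.card * σ := by rw [Finset.sum_const, nsmul_eq_mul]
    have hIndep : IndepFun U (X j) μ := by
      have h := hindep.indepFun_finset_sum_of_notMem hm hj
      have : (∑ i ∈ s, X i) = U := by ext ω; simp [hU]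
      rwa [this] at h
    have hmap : μ.map (fun ω => (U ω, X j ω)) = (μ.map U).prod (μ.map (X j)) :=
      (indepFun_iff_map_prod_eq_prod_map_map hUm.aemeasurable (hm j).aemeasurable).1 hIndep
    haveI hPU : IsProbabilityMeasure (μ.map U) := Measure.isProbabilityMeasure_map hUm.aemeasurable
    haveI hPV : IsProbabilityMeasure (μ.map (X j)) := Measure.isProbabilityMeasure_map (hm j).aemeasurable
    set ν := μ.map (X j) with hν
    -- ae bounds on pushforwards
    have hsetm : ∀ c : ℝ, MeasurableSet {u : H | ‖u‖ ≤ c} := fun c =>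
      (isClosed_le continuous_norm continuous_const).measurableSet
    have hU_ae : ∀ᵐ u ∂(μ.map U), ‖u‖ ≤ s.card * σ :=
      (ae_map_iff hUm.aemeasurable (hsetm _)).2 hUb
    have hV_ae : ∀ᵐ v ∂ν, ‖v‖ ≤ σ := (ae_map_iff (hm j).aemeasurable (hsetm _)).2 (hb j)
    -- ae bound on product
    have hprod_ae : ∀ᵐ p ∂((μ.map U).prod ν), ‖p.1‖ ≤ s.card * σ ∧ ‖p.2‖ ≤ σ := by
      rw [ae_iff]
      have hsub : {p : H × H | ¬(‖p.1‖ ≤ s.card * σ ∧ ‖p.2‖ ≤ σ)}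
          ⊆ ({u : H | ‖u‖ ≤ s.card * σ}ᶜ ×ˢ Set.univ) ∪ (Set.univ ×ˢ {v : H | ‖v‖ ≤ σ}ᶜ) := by
        intro p hp
        simp only [Set.mem_setOf_eq, not_and_or] at hp
        rcases hp with h | h
        · exact Or.inl ⟨h, Set.mem_univ _⟩
        · exact Or.inr ⟨Set.mem_univ _, h⟩
      refine measure_mono_null hsub (measure_union_null ?_ ?_)
      · rw [Measure.prod_prod, Set.compl_setOf, ae_iff.1 hU_ae, zero_mul]
      · rw [Measure.prod_prod, Set.compl_setOf, ae_iff.1 hV_ae, mul_zero]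
    -- integrability of G on product
    set G : H × H → ℝ := fun p => F (p.1 + p.2) with hG
    have hGc : Continuous G := hFc.comp (continuous_fst.add continuous_snd)
    have hGint : Integrable G ((μ.map U).prod ν) := by
      refine Integrable.mono' (integrable_const (Real.cosh (lam * (s.card * σ + σ))))
        hGc.aestronglyMeasurable ?_
      filter_upwards [hprod_ae] with p hp
      rw [Real.norm_eq_abs, abs_of_nonneg (Real.cosh_pos _).le]
      rw [Real.cosh_le_cosh, abs_of_nonneg (by positivity), abs_of_nonneg (by positivity)]
      apply mul_le_mul_of_nonneg_left _ hlam
      calc ‖p.1 + p.2‖ ≤ ‖p.1‖ + ‖p.2‖ := norm_add_le _ _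
        _ ≤ s.card * σ + σ := add_le_add hp.1 hp.2
    -- rewrite LHS
    have hLHS : ∫ ω, Real.cosh (lam * ‖∑ i ∈ Finset.cons j s hj, X i ω‖) ∂μ
        = ∫ p, G p ∂((μ.map U).prod ν) := by
      rw [← hmap, integral_map ((hUm.aemeasurable).prodMk (hm j).aemeasurable)
        hGc.aestronglyMeasurable]
      apply integral_congr_ae
      filter_upwards with ω
      simp only [hG, hF, Finset.sum_cons]
      rw [add_comm (X j ω) (∑ i ∈ s, X i ω)]
    rw [hLHS, integral_prod _ hGint]
    -- inner integral bound
    have hWi : Integrable (id : H → H) ν := by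
      rw [hν]
      exact (integrable_map_measure aestronglyMeasurable_id (hm j).aemeasurable).2 (hi j)
    have hW0 : ∫ v, id v ∂ν = 0 := by
      rw [hν, integral_map (hm j).aemeasurable aestronglyMeasurable_id]
      exact h0 j
    have hV_ae' : ∀ᵐ v ∂ν, ‖id v‖ ≤ σ := hV_ae
    have hinner : ∀ u : H, ∫ v, G (u, v) ∂ν ≤ F u * Real.cosh (lam * σ) := by
      intro u
      have := integral_cosh_step ν hWi hW0 hσ hV_ae' hlam u
      simpa [hG, hF, id] using this
    have hRHSint : Integrable (fun u => F u * Real.cosh (lam * σ)) (μ.map U) := by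
      refine Integrable.mono' (integrable_const (Real.cosh (lam * (s.card * σ))
          * Real.cosh (lam * σ))) (hFc.aestronglyMeasurable.mul aestronglyMeasurable_const) ?_
      filter_upwards [hU_ae] with u hu
      rw [Real.norm_eq_abs, abs_of_nonneg (by positivity)]
      apply mul_le_mul_of_nonneg_right _ (Real.cosh_pos _).le
      rw [hF]
      simp only []
      rw [Real.cosh_le_cosh, abs_of_nonneg (by positivity), abs_of_nonneg (by positivity)]
      exact mul_le_mul_of_nonneg_left hu hlam
    have hstep : ∫ u, ∫ v, G (u, v) ∂ν ∂(μ.map U)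
        ≤ ∫ u, F u * Real.cosh (lam * σ) ∂(μ.map U) :=
      integral_mono (hGint.integral_prod_left) hRHSint hinner
    have hfin : ∫ u, F u * Real.cosh (lam * σ) ∂(μ.map U)
        = (∫ ω, Real.cosh (lam * ‖U ω‖) ∂μ) * Real.cosh (lam * σ) := by
      rw [integral_mul_const, integral_map hUm.aemeasurable hFc.aestronglyMeasurable]
    have hIH' : (∫ ω, Real.cosh (lam * ‖U ω‖) ∂μ) * Real.cosh (lam * σ)
        ≤ Real.cosh (lam * σ) ^ s.card * Real.cosh (lam * σ) :=
      mul_le_mul_of_nonneg_right IH (Real.cosh_pos _).le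
    calc ∫ u, ∫ v, G (u, v) ∂ν ∂(μ.map U) ≤ _ := hstep
      _ = (∫ ω, Real.cosh (lam * ‖U ω‖) ∂μ) * Real.cosh (lam * σ) := hfin
      _ ≤ Real.cosh (lam * σ) ^ s.card * Real.cosh (lam * σ) := hIH'
      _ = Real.cosh (lam * σ) ^ (Finset.cons j s hj).card := by
        rw [Finset.card_cons, pow_succ]

end BatchMeanAux


/-- Concentration of the batch-mean of `B` independent bounded-deviation random
vectors around their common mean (established inside the paper's Claim 3). -/
theorem batch_mean_concentration
    {Ω : Type*} [MeasurableSpace Ω] (P : Measure Ω) [IsProbabilityMeasure P]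
    {d : ℕ} (B : ℕ) (hB : 1 ≤ B)
    (Y : Fin B → Ω → EuclideanSpace ℝ (Fin d))
    (hindep : iIndepFun Y P)
    (hint : ∀ i, Integrable (Y i) P)
    (m : EuclideanSpace ℝ (Fin d)) (hmean : ∀ i, ∫ ω, Y i ω ∂P = m)
    (σ : ℝ) (hσ : 0 ≤ σ) (hbdd : ∀ i, ∀ᵐ ω ∂P, ‖Y i ω - m‖ ≤ σ)
    (δ : ℝ) (hδ0 : 0 < δ) (hδ1 : δ < 1) :
    ENNReal.ofReal (1 - δ) ≤
      P {ω | ‖(B : ℝ)⁻¹ • ∑ i, Y i ω - m‖ ≤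
        σ * Real.sqrt (2 * Real.log (2 / δ) / B)} := by
  classical
  set r : ℝ := σ * Real.sqrt (2 * Real.log (2 / δ) / B) with hr
  set A : Set Ω := {ω | ‖(B : ℝ)⁻¹ • ∑ i, Y i ω - m‖ ≤ r} with hA
  -- basic positivity facts
  have hBpos : (0:ℝ) < B := by exact_mod_cast Nat.lt_of_lt_of_le Nat.zero_lt_one hB
  have hBne : (B:ℝ) ≠ 0 := ne_of_gt hBpos
  set L : ℝ := Real.log (2 / δ) with hL
  have hLpos : 0 < L := Real.log_pos (by rw [lt_div_iff₀ hδ0]; linarith)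
  -- measurable versions
  set Y' : Fin B → Ω → EuclideanSpace ℝ (Fin d) := fun i => ((hint i).aestronglyMeasurable).mk (Y i) with hY'
  have hY'sm : ∀ i, StronglyMeasurable (Y' i) := fun i =>
    ((hint i).aestronglyMeasurable).stronglyMeasurable_mk
  have hY'ae : ∀ i, Y i =ᵐ[P] Y' i := fun i => ((hint i).aestronglyMeasurable).ae_eq_mk
  set X : Fin B → Ω → EuclideanSpace ℝ (Fin d) := fun i ω => Y' i ω - m with hX
  have hXsm : ∀ i, StronglyMeasurable (X i) := fun i =>
    (hY'sm i).sub stronglyMeasurable_const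
  have hXm : ∀ i, Measurable (X i) := fun i => (hXsm i).measurable
  have hXae : ∀ i, (fun ω => Y i ω - m) =ᵐ[P] X i := by
    intro i
    filter_upwards [hY'ae i] with ω hω
    simp [hX, hω]
  have hXi : ∀ i, Integrable (X i) P := fun i =>
    (((hint i).sub (integrable_const m)).congr (hXae i))
  have hX0 : ∀ i, ∫ ω, X i ω ∂P = 0 := by
    intro i
    rw [← integral_congr_ae (hXae i), integral_sub (hint i) (integrable_const m),
      integral_const, hmean i]
    simp
  have hXb : ∀ i, ∀ᵐ ω ∂P, ‖X i ω‖ ≤ σ := by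
    intro i
    filter_upwards [hbdd i, hXae i] with ω h1 h2
    rw [← h2]; exact h1
  have hXindep : iIndepFun X P := by
    have h1 : iIndepFun Y' P := iIndepFun_congr_ae hindep hY'ae
    have h2 := h1.comp (fun _ => fun v : EuclideanSpace ℝ (Fin d) => v - m)
      (fun _ => measurable_id.sub measurable_const)
    exact h2
  set S : Ω → EuclideanSpace ℝ (Fin d) := fun ω => ∑ i, X i ω with hS
  -- a.e. identity on the averaged quantity
  have hident : ∀ᵐ ω ∂P, (B : ℝ)⁻¹ • ∑ i, Y i ω - m = (B:ℝ)⁻¹ • S ω := by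
    have hall : ∀ᵐ ω ∂P, ∀ i, Y i ω = Y' i ω := ae_all_iff.2 hY'ae
    filter_upwards [hall] with ω hω
    have hsum : ∑ i, Y i ω = ∑ i, Y' i ω := Finset.sum_congr rfl fun i _ => hω i
    have hSeq : S ω = (∑ i, Y' i ω) - (B:ℝ) • m := by
      rw [hS]
      simp only [hX]
      rw [Finset.sum_sub_distrib, Finset.sum_const, Finset.card_univ, Fintype.card_fin,
        ← Nat.cast_smul_eq_nsmul ℝ]
    rw [hsum, hSeq, smul_sub, smul_smul, inv_mul_cancel₀ hBne, one_smul]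
  -- norm of S a.e. bounded
  have hSb : ∀ᵐ ω ∂P, ‖S ω‖ ≤ B * σ := by
    have hall : ∀ᵐ ω ∂P, ∀ i, ‖X i ω‖ ≤ σ := ae_all_iff.2 hXb
    filter_upwards [hall] with ω hω
    calc ‖∑ i, X i ω‖ ≤ ∑ i, ‖X i ω‖ := norm_sum_le _ _
      _ ≤ ∑ _i : Fin B, σ := Finset.sum_le_sum fun i _ => hω i
      _ = B * σ := by rw [Finset.sum_const, Finset.card_univ, Fintype.card_fin, nsmul_eq_mul]
  by_cases hσ0 : σ = 0
  · -- degenerate case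
    subst hσ0
    have hae : ∀ᵐ ω ∂P, ω ∈ A := by
      filter_upwards [hident, hSb] with ω h1 h2
      have hS0 : S ω = 0 := by
        have := norm_le_zero_iff.1 (by simpa using h2)
        exact this
      rw [hA, Set.mem_setOf_eq, h1, hS0, smul_zero, norm_zero, hr]
      positivity
    have hcompl : P Aᶜ = 0 := by
      have := ae_iff.1 hae
      exact this
    have h1 : (1:ENNReal) ≤ P A + P Aᶜ := by
      rw [← measure_univ (μ := P), ← Set.union_compl_self A]
      exact measure_union_le _ _
    rw [hcompl, add_zero] at h1
    calc ENNReal.ofReal (1 - δ) ≤ 1 := by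
          apply ENNReal.ofReal_le_one.2; linarith
      _ ≤ P A := h1
  · have hσpos : 0 < σ := lt_of_le_of_ne hσ (Ne.symm hσ0)
    set t : ℝ := σ * Real.sqrt (2 * L * B) with ht
    have htpos : 0 < t := by
      rw [ht]; positivity
    have hBr : (B:ℝ) * r = t := by
      rw [hr, ht]
      have : (B:ℝ) * (σ * Real.sqrt (2 * L / B)) = σ * ((B:ℝ) * Real.sqrt (2 * L / B)) := by ring
      rw [this]
      congr 1
      rw [show (B:ℝ) * Real.sqrt (2 * L / B) = Real.sqrt ((B:ℝ)^2 * (2 * L / B)) by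
        rw [Real.sqrt_mul (sq_nonneg _), Real.sqrt_sq hBpos.le]]
      congr 1
      field_simp
    set lam : ℝ := t / (σ ^ 2 * B) with hlam
    have hlampos : 0 < lam := by rw [hlam]; positivity
    have ht2 : t ^ 2 = σ ^ 2 * (2 * L * B) := by
      rw [ht, mul_pow, Real.sq_sqrt (by positivity)]
    have hlamt : lam * t = 2 * L := by
      rw [hlam, div_mul_eq_mul_div, ← sq, ht2]
      field_simp
    have hlamσB : (lam * σ) ^ 2 / 2 * B = L := by
      have haux : (t / (σ ^ 2 * B) * σ) ^ 2 / 2 * B = t ^ 2 / (2 * σ ^ 2 * B) := by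
        field_simp
      rw [hlam, haux, ht2]
      field_simp
    -- the integrand
    set f : Ω → ℝ := fun ω => Real.cosh (lam * ‖S ω‖) with hf
    have hfm : AEStronglyMeasurable f P := by
      apply Continuous.comp_aestronglyMeasurable
        (Real.continuous_cosh.comp (continuous_const.mul continuous_norm))
      exact (Finset.stronglyMeasurable_fun_sum Finset.univ fun i _ => hXsm i).aestronglyMeasurable
    have hfi : Integrable f P := by
      refine Integrable.mono' (integrable_const (Real.cosh (lam * (B * σ)))) hfm ?_
      filter_upwards [hSb] with ω hω
      rw [Real.norm_eq_abs, abs_of_nonneg (Real.cosh_pos _).le, Real.cosh_le_cosh,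
        abs_of_nonneg (by positivity), abs_of_nonneg (by positivity)]
      exact mul_le_mul_of_nonneg_left hω hlampos.le
    -- Markov
    set G : Set Ω := {ω | Real.cosh (lam * t) ≤ f ω} with hG
    have hmarkov := mul_meas_ge_le_integral_of_nonneg
      (ae_of_all P fun ω => (Real.cosh_pos (lam * ‖S ω‖)).le) hfi (Real.cosh (lam * t))
    have hkey : ∫ ω, f ω ∂P ≤ Real.cosh (lam * σ) ^ B := by
      have := sum_cosh_bound hXm hXindep hXi hX0 hσ hXb hlampos.le Finset.univ
      simpa [hf, hS, Finset.card_univ] using this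
    have hcoshexp : Real.cosh (lam * σ) ^ B ≤ Real.exp L := by
      calc Real.cosh (lam * σ) ^ B ≤ Real.exp ((lam * σ) ^ 2 / 2) ^ B := by
            apply pow_le_pow_left₀ (Real.cosh_pos _).le (Real.cosh_le_exp_half_sq _)
        _ = Real.exp ((lam * σ) ^ 2 / 2 * B) := by
            rw [← Real.exp_nat_mul]; ring_nf
        _ = Real.exp L := by rw [hlamσB]
    have hcosh_lb : Real.exp (2 * L) / 2 ≤ Real.cosh (lam * t) := by
      rw [← hlamt, Real.cosh_eq]
      have := (Real.exp_pos (-(lam * t))).le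
      linarith
    have hexpL : Real.exp L = 2 / δ := Real.exp_log (by positivity)
    have hPG : P G ≤ ENNReal.ofReal δ := by
      have h1 : Real.cosh (lam * t) * (P G).toReal ≤ Real.exp L :=
        le_trans hmarkov (le_trans hkey hcoshexp)
      have h2 : Real.exp (2 * L) / 2 * (P G).toReal ≤ Real.cosh (lam * t) * (P G).toReal :=
        mul_le_mul_of_nonneg_right hcosh_lb ENNReal.toReal_nonneg
      have h3 : Real.exp (2 * L) / 2 * (P G).toReal ≤ Real.exp L := le_trans h2 h1
      have hexp2L : Real.exp (2 * L) = (2 / δ) ^ 2 := by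
        rw [two_mul, Real.exp_add, hexpL]; ring
      have h4 : (P G).toReal ≤ δ := by
        rw [hexp2L, hexpL] at h3
        have hpos : 0 < (2 / δ) ^ 2 / 2 := by positivity
        rw [← le_div_iff₀' hpos] at h3
        calc (P G).toReal ≤ 2 / δ / ((2 / δ) ^ 2 / 2) := h3
          _ = δ := by field_simp
      exact ENNReal.le_ofReal_iff_toReal_le (measure_ne_top P G) hδ0.le |>.2 h4
    -- complement of A is a.e. inside G
    have hae : ∀ᵐ ω ∂P, ω ∉ A → ω ∈ G := by
      filter_upwards [hident] with ω h1 h2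
      rw [hA, Set.mem_setOf_eq, not_le] at h2
      rw [h1] at h2
      have hnorm : ‖(B:ℝ)⁻¹ • S ω‖ = (B:ℝ)⁻¹ * ‖S ω‖ := by
        rw [norm_smul, Real.norm_eq_abs, abs_of_pos (by positivity)]
      rw [hnorm] at h2
      have h3 : t < ‖S ω‖ := by
        rw [inv_mul_eq_div] at h2
        rw [← hBr, mul_comm]
        exact (lt_div_iff₀ hBpos).1 h2
      rw [hG, Set.mem_setOf_eq, hf, Real.cosh_le_cosh, abs_of_nonneg (by positivity),
        abs_of_nonneg (by positivity)]
      exact mul_le_mul_of_nonneg_left h3.le hlampos.le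
    have hcompl : P Aᶜ ≤ ENNReal.ofReal δ := by
      have hsub : Aᶜ ⊆ G ∪ {ω | ¬(ω ∉ A → ω ∈ G)} := by
        intro ω hω
        by_cases hωG : ω ∈ G
        · exact Or.inl hωG
        · exact Or.inr (by simp only [Set.mem_setOf_eq]; intro h; exact hωG (h hω))
      calc P Aᶜ ≤ P (G ∪ {ω | ¬(ω ∉ A → ω ∈ G)}) := measure_mono hsub
        _ ≤ P G + P {ω | ¬(ω ∉ A → ω ∈ G)} := measure_union_le _ _
        _ = P G := by rw [ae_iff.1 hae, add_zero]
        _ ≤ ENNReal.ofReal δ := hPG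
    have h1 : (1:ENNReal) ≤ P A + ENNReal.ofReal δ := by
      calc (1:ENNReal) = P Set.univ := (measure_univ (μ := P)).symm
        _ = P (A ∪ Aᶜ) := by rw [Set.union_compl_self]
        _ ≤ P A + P Aᶜ := measure_union_le _ _
        _ ≤ P A + ENNReal.ofReal δ := add_le_add le_rfl hcompl
    have h2 : ENNReal.ofReal (1 - δ) + ENNReal.ofReal δ ≤ P A + ENNReal.ofReal δ := by
      rw [← ENNReal.ofReal_add (by linarith) hδ0.le]
      rw [sub_add_cancel]
      calc ENNReal.ofReal 1 = 1 := by simp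
        _ ≤ P A + ENNReal.ofReal δ := h1
    exact (ENNReal.add_le_add_iff_right ENNReal.ofReal_ne_top).1 h2
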